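/- arXiv:2004.12790 — 2 statements merged into one kernel-verified Lean document; each statement's English description precedes it below -/
import Mathlib

section
/- Let A be a closed, densely defined operator with compact resolvent on a complex Hilbert space H with 0 ∈ ρ(A), and let W be a Hilbert space continuously and densely embedded in H with D(A) ⊂ W (so that A⁻¹ ∈ L(H, W)). Let L > 0 and d = L‖A⁻¹‖_{L(H,W)}. Then σ(A) ∩ {z ∈ ℂ : |z| ≤ L} ⊂ (W(A⁻¹, d))⁻¹. -/
open Filter Topology Metric

noncomputable section

variable {H : Type*} [NormedAddCommGroup H] [InnerProductSpace ℂ H] [CompleteSpace H]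

/-- `R : H →L[ℂ] H` is a (two-sided, everywhere defined) bounded inverse of `A - lam`,
i.e. `lam` belongs to the resolvent set of `A` with resolvent `R`. -/
def IsResolventAt (A : H →ₗ.[ℂ] H) (lam : ℂ) (R : H →L[ℂ] H) : Prop :=
  (∀ x : A.domain, R (A x - lam • (x : H)) = (x : H)) ∧
  ∀ y : H, ∃ hy : R y ∈ A.domain, A ⟨R y, hy⟩ - lam • R y = y

/-- The resolvent set `ρ(A)` of a (possibly unbounded) operator `A`. -/
def presolventSet (A : H →ₗ.[ℂ] H) : Set ℂ :=
  {lam | ∃ R, IsResolventAt A lam R}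

-- The resolvent operator `(A - lam)⁻¹` (with junk value `0` off the resolvent set).
open scoped Classical in
def resolventOf (A : H →ₗ.[ℂ] H) (lam : ℂ) : H →L[ℂ] H :=
  if h : ∃ R, IsResolventAt A lam R then h.choose else 0

/-- The `ε`-pseudospectrum `σ_ε(A) = {λ : ‖(A-λ)⁻¹‖ > 1/ε}`, where `‖(A-λ)⁻¹‖` is
understood as `∞` for `λ` in the spectrum. -/
def pseudoSpectrum (ε : ℝ) (A : H →ₗ.[ℂ] H) : Set ℂ :=
  {lam | lam ∉ presolventSet A ∨ 1 / ε < ‖resolventOf A lam‖}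

/-- The numerical range `W(T) = {⟨T x, x⟩ : ‖x‖ = 1}` of a bounded operator `T`;
`⟨T x, x⟩` (inner product linear in the first argument) is written as
`inner x (T x)` in the mathlib convention. -/
def numRange (T : H →L[ℂ] H) : Set ℂ :=
  {z | ∃ x : H, ‖x‖ = 1 ∧ z = (inner ℂ x (T x) : ℂ)}

/-- The numerical range of a (possibly unbounded) operator. -/
def pnumRange (A : H →ₗ.[ℂ] H) : Set ℂ :=
  {z | ∃ x : A.domain, ‖(x : H)‖ = 1 ∧ z = (inner ℂ (x : H) (A x) : ℂ)}

/-- The numerical radius of a bounded operator. -/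
def nradius (T : H →L[ℂ] H) : ℝ :=
  sSup ((fun z : ℂ => ‖z‖) '' numRange T)

/-- The numerical range of a bounded operator on a subspace `U` of `H`. -/
def numRangeSub {U : Submodule ℂ H} (T : U →L[ℂ] U) : Set ℂ :=
  {z | ∃ x : U, ‖(x : H)‖ = 1 ∧ z = (inner ℂ (x : H) ((T x : U) : H) : ℂ)}

/-- `B_δ(U) = {z : dist (z, U) < δ}`, the `δ`-neighborhood of a set `U ⊆ ℂ`. -/
def nbhdSet (δ : ℝ) (U : Set ℂ) : Set ℂ :=
  {z | ∃ u ∈ U, dist z u < δ}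

/-- `U⁻¹ = {z⁻¹ : z ∈ U \ {0}}`. -/
def invSet (U : Set ℂ) : Set ℂ :=
  {z | ∃ u ∈ U, u ≠ 0 ∧ z = u⁻¹}

/-- `U + s = {z + s : z ∈ U}`. -/
def shiftSet (U : Set ℂ) (s : ℂ) : Set ℂ :=
  {z | ∃ u ∈ U, z = u + s}

local notation "⟪" x ", " y "⟫" => @inner ℂ _ _ x y

/-- An operator bounded below has closed range. -/
lemma closed_range_of_bound (f : H →L[ℂ] H) {c : ℝ} (hc : 0 < c)
    (h : ∀ x, c * ‖x‖ ≤ ‖f x‖) : IsClosed (Set.range f) := by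
  have hb : ∀ x, ‖x‖ ≤ ((⟨c, hc.le⟩ : NNReal)⁻¹ : NNReal) * ‖f x‖ := by
    intro x
    change ‖x‖ ≤ c⁻¹ * ‖f x‖
    rw [inv_mul_eq_div, le_div_iff₀ hc]
    simpa [mul_comm] using h x
  exact (f.antilipschitz_of_bound hb).isClosed_range f.uniformContinuous

lemma unit_eigvec {T : H →L[ℂ] H} {μ : ℂ} {v : H} (hv : T v = μ • v) (hv0 : v ≠ 0) :
    ∃ u : H, ‖u‖ = 1 ∧ T u = μ • u := by
  have hn : (‖v‖ : ℂ) ≠ 0 := by simpa using hv0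
  refine ⟨(‖v‖ : ℂ)⁻¹ • v, ?_, ?_⟩
  · rw [norm_smul]
    simp [inv_mul_cancel₀ (norm_ne_zero_iff.mpr hv0)]
  · rw [map_smul, hv, smul_comm]

/-- Riesz–Fredholm: a nonzero non-unit point for a compact operator is an eigenvalue. -/
lemma eig_of_compact_not_unit (T : H →L[ℂ] H) (hT : IsCompactOperator (⇑T))
    {μ : ℂ} (hμ : μ ≠ 0) (h : ¬ IsUnit (μ • (1 : H →L[ℂ] H) - T)) :
    ∃ v : H, ‖v‖ = 1 ∧ T v = μ • v := by
  by_contra hno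
  -- no eigenvector at all
  have hno' : ∀ v : H, T v = μ • v → v = 0 := by
    intro v hv
    by_contra hv0
    exact hno (unit_eigvec hv hv0)
  apply h
  set S : H →L[ℂ] H := μ • (1 : H →L[ℂ] H) - T with hS
  have hSapp : ∀ x, S x = μ • x - T x := fun x => rfl
  -- compact image of the closed unit ball
  obtain ⟨K, hK, hTK⟩ := hT.image_closedBall_subset_compact 1
  have hμn : (0 : ℝ) < ‖μ‖ := norm_pos_iff.mpr hμ
  -- S is bounded below
  have hbdd : ∃ c : ℝ, 0 < c ∧ ∀ x, c * ‖x‖ ≤ ‖S x‖ := by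
    by_contra hb
    push_neg at hb
    have hseq : ∀ n : ℕ, ∃ u : H, ‖u‖ = 1 ∧ ‖S u‖ < 1 / (n + 1) := by
      intro n
      obtain ⟨x, hx⟩ := hb (1 / (n + 1)) (by positivity)
      have hx0 : x ≠ 0 := by
        rintro rfl
        simp only [map_zero, norm_zero, mul_zero] at hx
        exact lt_irrefl _ hx
      have hxn : (0:ℝ) < ‖x‖ := norm_pos_iff.mpr hx0
      refine ⟨(‖x‖ : ℂ)⁻¹ • x, ?_, ?_⟩
      · rw [norm_smul]; simp [inv_mul_cancel₀ hxn.ne']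
      · rw [map_smul, norm_smul]
        simp only [norm_inv, Complex.norm_real, norm_norm]
        calc ‖x‖⁻¹ * ‖S x‖ < ‖x‖⁻¹ * (1 / (n+1) * ‖x‖) :=
              mul_lt_mul_of_pos_left hx (by positivity)
          _ = 1 / (n + 1) := by field_simp
    choose u hu1 hu2 using hseq
    have huK : ∀ n, T (u n) ∈ K := fun n =>
      hTK ⟨u n, by simp [mem_closedBall, dist_eq_norm, hu1 n], rfl⟩
    obtain ⟨a, -, φ, hφ, hconv⟩ := hK.tendsto_subseq huK
    have hS0 : Tendsto (fun n => S (u (φ n))) atTop (𝓝 0) := by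
      refine squeeze_zero_norm (a := fun n : ℕ => 1 / (n + 1)) (fun n => ?_)
        tendsto_one_div_add_atTop_nhds_zero_nat
      calc ‖S (u (φ n))‖ ≤ 1 / ((φ n : ℝ) + 1) := (hu2 (φ n)).le
        _ ≤ 1 / ((n : ℝ) + 1) := by
            apply one_div_le_one_div_of_le (by positivity)
            exact_mod_cast Nat.succ_le_succ (hφ.le_apply)
    have hμu : Tendsto (fun n => μ • u (φ n)) atTop (𝓝 a) := by
      have : (fun n => μ • u (φ n)) = fun n => S (u (φ n)) + T (u (φ n)) := by
        funext n; rw [hSapp]; abel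
      rw [this]
      simpa using hS0.add hconv
    have hulim : Tendsto (fun n => u (φ n)) atTop (𝓝 (μ⁻¹ • a)) := by
      have := hμu.const_smul (μ⁻¹)
      simpa [smul_smul, inv_mul_cancel₀ hμ] using this
    have hna : ‖μ⁻¹ • a‖ = 1 := by
      have h1 := (continuous_norm.tendsto _).comp hulim
      simp only [Function.comp_def, hu1] at h1
      exact tendsto_nhds_unique h1 tendsto_const_nhds
    have hTa : T (μ⁻¹ • a) = μ • (μ⁻¹ • a) := by
      have h1 : Tendsto (fun n => T (u (φ n))) atTop (𝓝 (T (μ⁻¹ • a))) :=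
        (T.continuous.tendsto _).comp hulim
      have h2 := tendsto_nhds_unique h1 hconv
      rw [h2, smul_smul, mul_inv_cancel₀ hμ, one_smul]
    exact hno ⟨_, hna, hTa⟩
  obtain ⟨c, hc, hcb⟩ := hbdd
  -- S is injective
  have hinj : Function.Injective S := by
    intro x y hxy
    have h0 : S (x - y) = 0 := by rw [map_sub, hxy, sub_self]
    have hle := hcb (x - y)
    rw [h0, norm_zero] at hle
    have hn : ‖x - y‖ = 0 := le_antisymm (by nlinarith [norm_nonneg (x - y)]) (norm_nonneg _)
    rwa [norm_sub_eq_zero_iff] at hn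
  -- powers of S are bounded below
  have hpow : ∀ (n : ℕ) (x : H), c ^ n * ‖x‖ ≤ ‖(S ^ n) x‖ := by
    intro n
    induction n with
    | zero => simp
    | succ n ih =>
      intro x
      have hps : (S ^ (n+1)) x = (S ^ n) (S x) := by rw [pow_succ]; rfl
      rw [hps]
      calc c ^ (n+1) * ‖x‖ = c ^ n * (c * ‖x‖) := by ring
        _ ≤ c ^ n * ‖S x‖ := mul_le_mul_of_nonneg_left (hcb x) (by positivity)
        _ ≤ ‖(S ^ n) (S x)‖ := ih (S x)
  have hpowinj : ∀ n : ℕ, Function.Injective (S ^ n : H →L[ℂ] H) := by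
    intro n
    induction n with
    | zero => simp [Function.Injective]
    | succ n ih =>
      intro x y hxy
      have hx' : (S ^ n) (S x) = (S ^ n) (S y) := by
        rw [show ∀ z : H, (S ^ n) (S z) = (S ^ (n+1)) z from fun z => by rw [pow_succ]; rfl,
          show ∀ z : H, (S ^ n) (S z) = (S ^ (n+1)) z from fun z => by rw [pow_succ]; rfl, hxy]
      exact hinj (ih hx')
  set Hn : ℕ → Submodule ℂ H := fun n => LinearMap.range ((S ^ n : H →L[ℂ] H) : H →ₗ[ℂ] H) with hHn
  have hHcl : ∀ n, IsClosed (Hn n : Set H) := by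
    intro n
    have he : (Hn n : Set H) = Set.range (S ^ n : H →L[ℂ] H) := by
      ext z; exact LinearMap.mem_range
    rw [he]
    exact closed_range_of_bound _ (by positivity : (0:ℝ) < c ^ n) (hpow n)
  have hmapS : ∀ (n : ℕ) (x : H), x ∈ Hn n → S x ∈ Hn (n + 1) := by
    rintro n x ⟨z, rfl⟩
    exact ⟨z, by rw [pow_succ']; rfl⟩
  have hdec : ∀ n : ℕ, Hn (n + 1) ≤ Hn n := by
    rintro n y ⟨z, rfl⟩
    exact ⟨S z, by rw [pow_succ]; rfl⟩
  have hanti : ∀ {m n : ℕ}, m ≤ n → Hn n ≤ Hn m := by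
    intro m n hmn
    induction hmn with
    | refl => exact le_rfl
    | step _ ih => exact le_trans (hdec _) ih
  by_cases hsurj : LinearMap.range (S : H →ₗ[ℂ] H) = ⊤
  · -- S bijective ⟹ S is a unit
    exact ContinuousLinearMap.isUnit_iff_bijective.mpr
      ⟨hinj, LinearMap.range_eq_top.mp hsurj⟩
  · exfalso
    obtain ⟨x₀, hx₀⟩ : ∃ x₀ : H, x₀ ∉ LinearMap.range (S : H →ₗ[ℂ] H) := by
      by_contra hco
      push_neg at hco
      exact hsurj (Submodule.eq_top_iff'.mpr hco)
    have hstrict : ∀ n : ℕ, ¬ (Hn n ≤ Hn (n + 1)) := by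
      intro n hle
      apply hx₀
      have hmem : (S ^ n) x₀ ∈ Hn (n + 1) := hle ⟨x₀, rfl⟩
      obtain ⟨z, hz⟩ := hmem
      have hz' : (S ^ n) (S z) = (S ^ n) x₀ := by rw [← hz, pow_succ]; rfl
      exact ⟨z, hpowinj n hz'⟩
    -- choose unit vectors in Hn n orthogonal to Hn (n+1)
    have hpick : ∀ n : ℕ, ∃ x : H, x ∈ Hn n ∧ ‖x‖ = 1 ∧ x ∈ (Hn (n + 1))ᗮ := by
      intro n
      haveI : CompleteSpace (Hn (n + 1)) := (hHcl (n + 1)).completeSpace_coe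
      obtain ⟨v, hv, hvn⟩ : ∃ v : H, v ∈ Hn n ∧ v ∉ Hn (n + 1) := by
        by_contra hco
        push_neg at hco
        exact hstrict n hco
      set b := v - (Submodule.orthogonalProjectionOnto (Hn (n + 1)) v : H) with hb
      have hbo : b ∈ (Hn (n + 1))ᗮ := Submodule.sub_starProjection_mem_orthogonal (K := Hn (n + 1)) v
      have hbH : b ∈ Hn n :=
        Submodule.sub_mem _ hv (hdec n (Submodule.orthogonalProjectionOnto (Hn (n + 1)) v).2)
      have hb0 : b ≠ 0 := by
        intro hb0
        apply hvn
        have hveq : v = (Submodule.orthogonalProjectionOnto (Hn (n + 1)) v : H) := by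
          rwa [hb, sub_eq_zero] at hb0
        rw [hveq]; exact (Submodule.orthogonalProjectionOnto (Hn (n + 1)) v).2
      refine ⟨(‖b‖ : ℂ)⁻¹ • b, Submodule.smul_mem _ _ hbH, ?_, Submodule.smul_mem _ _ hbo⟩
      rw [norm_smul]
      simp [inv_mul_cancel₀ (norm_ne_zero_iff.mpr hb0)]
    choose x hxH hx1 hxo using hpick
    -- separation of the images
    have hsep : ∀ m n : ℕ, m < n → ‖μ‖ ≤ ‖T (x m) - T (x n)‖ := by
      intro m n hmn
      set w := S (x m) - S (x n) + μ • x n with hw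
      have hwmem : w ∈ Hn (m + 1) := by
        apply Submodule.add_mem
        · exact Submodule.sub_mem _ (hmapS m _ (hxH m))
            (hanti (Nat.succ_le_succ hmn.le) (hmapS n _ (hxH n)))
        · exact Submodule.smul_mem _ _ (hanti hmn (hxH n))
      have hTeq : T (x m) - T (x n) = μ • x m - w := by
        rw [hw, hSapp, hSapp]; abel
      have horto : ⟪w, μ • (x m)⟫ = 0 := by
        rw [inner_smul_right]
        have := (hxo m) w hwmem
        rw [this, mul_zero]
      have hin : ⟪μ • x m - w, μ • x m⟫ = (‖μ‖ : ℂ) ^ 2 := by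
        rw [inner_sub_left, horto, sub_zero, inner_self_eq_norm_sq_to_K, norm_smul, hx1 m]
        norm_num
      have hnm : ‖μ • x m‖ = ‖μ‖ := by rw [norm_smul, hx1 m, mul_one]
      have hcs : ‖μ‖ ^ 2 ≤ ‖μ • x m - w‖ * ‖μ‖ := by
        calc ‖μ‖ ^ 2 = ‖⟪μ • x m - w, μ • x m⟫‖ := by rw [hin]; simp
          _ ≤ ‖μ • x m - w‖ * ‖μ • x m‖ := norm_inner_le_norm _ _
          _ = ‖μ • x m - w‖ * ‖μ‖ := by rw [hnm]
      rw [hTeq]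
      nlinarith [norm_nonneg (μ • x m - w)]
    -- compactness contradiction
    have hxK : ∀ n, T (x n) ∈ K := fun n =>
      hTK ⟨x n, by simp [mem_closedBall, dist_eq_norm, hx1 n], rfl⟩
    obtain ⟨a, -, φ, hφ, hconv⟩ := hK.tendsto_subseq hxK
    have hc2 : CauchySeq (fun n => T (x (φ n))) := hconv.cauchySeq
    obtain ⟨N, hN⟩ := Metric.cauchySeq_iff'.mp hc2 (‖μ‖ / 2) (by positivity)
    have h1 := hN (N + 1) (by omega)
    rw [dist_eq_norm] at h1
    have h2 := hsep (φ N) (φ (N + 1)) (hφ (by omega))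
    rw [norm_sub_rev] at h1
    linarith

lemma isResolventAt_resolventOf {A : H →ₗ.[ℂ] H} {μ : ℂ} (h : μ ∈ presolventSet A) :
    IsResolventAt A μ (resolventOf A μ) := by
  have h' : ∃ R, IsResolventAt A μ R := h
  rw [resolventOf, dif_pos h']
  exact h'.choose_spec

/-- The resolvent at `0` is compact whenever some resolvent is compact. -/
lemma resolvent_zero_compact {A : H →ₗ.[ℂ] H} (h0 : (0 : ℂ) ∈ presolventSet A)
    {μ : ℂ} (hμ : μ ∈ presolventSet A) (hc : IsCompactOperator (⇑(resolventOf A μ) : H → H)) :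
    IsCompactOperator (⇑(resolventOf A 0) : H → H) := by
  set R₀ := resolventOf A 0 with hR₀def
  set Rμ := resolventOf A μ with hRμdef
  have hR₀ := isResolventAt_resolventOf h0
  have hRμ := isResolventAt_resolventOf hμ
  have hid : ∀ y : H, R₀ y = Rμ y - μ • R₀ (Rμ y) := by
    intro y
    obtain ⟨hy, hAy⟩ := hRμ.2 y
    have h1 : A ⟨Rμ y, hy⟩ = y + μ • Rμ y := eq_add_of_sub_eq hAy
    have h2 := hR₀.1 ⟨Rμ y, hy⟩
    simp only [zero_smul, sub_zero] at h2
    rw [h1, map_add, map_smul] at h2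
    -- h2 : R₀ y + μ • R₀ (Rμ y) = Rμ y
    exact eq_sub_of_add_eq h2
  have hcmp : IsCompactOperator (⇑Rμ - μ • (⇑R₀ ∘ ⇑Rμ)) :=
    hc.sub ((hc.continuous_comp R₀.continuous).smul μ)
  have hfun : (⇑R₀ : H → H) = ⇑Rμ - μ • (⇑R₀ ∘ ⇑Rμ) := by
    funext y
    simp only [Pi.sub_apply, Pi.smul_apply, Function.comp_apply]
    exact hid y
  rw [hfun]
  exact hcmp

/-- If `lam ∉ presolventSet A` and `0 ∈ presolventSet A`, with `lam ≠ 0`,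
then `lam⁻¹ • 1 - R₀` is not a unit. -/
lemma not_unit_of_spectrum {A : H →ₗ.[ℂ] H} (h0 : (0 : ℂ) ∈ presolventSet A)
    {lam : ℂ} (hlam : lam ∉ presolventSet A) (hlam0 : lam ≠ 0) :
    ¬ IsUnit (lam⁻¹ • (1 : H →L[ℂ] H) - resolventOf A 0) := by
  intro hU
  apply hlam
  set R₀ := resolventOf A 0 with hR₀def
  have hR₀ := isResolventAt_resolventOf h0
  set M : H →L[ℂ] H := lam⁻¹ • (1 : H →L[ℂ] H) - R₀ with hM
  obtain ⟨u, hu⟩ := hU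
  -- commutation of u⁻¹ with R₀
  have hMR : M * R₀ = R₀ * M := by
    rw [hM, sub_mul, mul_sub, smul_mul_assoc, mul_smul_comm, one_mul, mul_one]
  have huR : (u : H →L[ℂ] H) * R₀ = R₀ * u := by rw [hu, hMR]
  have hcomm : (↑u⁻¹ : H →L[ℂ] H) * R₀ = R₀ * ↑u⁻¹ := by
    have hC : Commute (↑u : H →L[ℂ] H) R₀ := huR
    exact hC.units_inv_left.eq
  -- T1 = 1 - lam • R₀ with two-sided inverse S1
  set T1 : H →L[ℂ] H := 1 - lam • R₀ with hT1
  set S1 : H →L[ℂ] H := lam⁻¹ • ↑u⁻¹ with hS1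
  have hT1M : T1 = lam • M := by
    rw [hT1, hM, smul_sub, smul_smul, mul_inv_cancel₀ hlam0, one_smul]
  have hTS : T1 * S1 = 1 := by
    rw [hT1M, hS1, smul_mul_assoc, mul_smul_comm, smul_smul, mul_inv_cancel₀ hlam0, one_smul,
      ← hu, u.mul_inv]
  have hST : S1 * T1 = 1 := by
    rw [hT1M, hS1, smul_mul_assoc, mul_smul_comm, smul_smul, inv_mul_cancel₀ hlam0, one_smul,
      ← hu, u.inv_mul]
  have hS1comm : S1 * R₀ = R₀ * S1 := by
    rw [hS1, smul_mul_assoc, hcomm, mul_smul_comm]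
  refine ⟨R₀ * S1, ?_, ?_⟩
  · intro x
    have h1 : R₀ (A x - lam • (x : H)) = T1 (x : H) := by
      have h2 := hR₀.1 x
      simp only [zero_smul, sub_zero] at h2
      rw [map_sub, map_smul, h2]
      simp [hT1, ContinuousLinearMap.sub_apply, ContinuousLinearMap.smul_apply,
        ContinuousLinearMap.one_apply]
    have : (R₀ * S1) (A x - lam • (x : H)) = (S1 * R₀) (A x - lam • (x : H)) := by
      rw [hS1comm]
    rw [this, ContinuousLinearMap.mul_apply, h1, ← ContinuousLinearMap.mul_apply, hST,
      ContinuousLinearMap.one_apply]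
  · intro y
    obtain ⟨hy, hAy⟩ := hR₀.2 (S1 y)
    simp only [zero_smul, sub_zero] at hAy
    have hRy : (R₀ * S1) y = R₀ (S1 y) := rfl
    refine ⟨by rw [hRy]; exact hy, ?_⟩
    have : A ⟨(R₀ * S1) y, by rw [hRy]; exact hy⟩ = S1 y := hAy
    rw [this, hRy]
    have : S1 y - lam • R₀ (S1 y) = T1 (S1 y) := by
      simp [hT1, ContinuousLinearMap.sub_apply, ContinuousLinearMap.smul_apply,
        ContinuousLinearMap.one_apply]
    rw [this, ← ContinuousLinearMap.mul_apply, hTS, ContinuousLinearMap.one_apply]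

/-- Proposition 4.2(a). -/
theorem spectrum_inter_ball_subset_inv_restricted_numRange
    (A : H →ₗ.[ℂ] H)
    (hclosed : IsClosed (A.graph : Set (H × H)))
    (hdense : Dense (A.domain : Set H))
    {W : Type*} [NormedAddCommGroup W] [InnerProductSpace ℂ W] [CompleteSpace W]
    (ι : W →L[ℂ] H) (hιinj : Function.Injective ι) (hιdense : DenseRange ι)
    (hdom : (A.domain : Set H) ⊆ Set.range ι)
    (h0 : (0 : ℂ) ∈ presolventSet A)
    (hcpt : ∃ μ ∈ presolventSet A, IsCompactOperator (⇑(resolventOf A μ) : H → H))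
    (Binv : H →L[ℂ] W) (hBinv : ∀ x, ι (Binv x) = resolventOf A 0 x)
    (L : ℝ) (hL : 0 < L) (d : ℝ) (hd : d = L * ‖Binv‖) :
    {z : ℂ | z ∉ presolventSet A} ∩ Metric.closedBall 0 L ⊆
      invSet {z : ℂ | ∃ w : W, ‖ι w‖ = 1 ∧ ‖w‖ ≤ d ∧
        z = (inner ℂ (ι w) (resolventOf A 0 (ι w)) : ℂ)} := by
  rintro lam ⟨hspec, hball⟩
  have hlam0 : lam ≠ 0 := by rintro rfl; exact hspec h0
  obtain ⟨μ, hμmem, hμcpt⟩ := hcpt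
  have hR0cpt : IsCompactOperator (⇑(resolventOf A 0) : H → H) :=
    resolvent_zero_compact h0 hμmem hμcpt
  have hnu := not_unit_of_spectrum h0 hspec hlam0
  obtain ⟨v, hv1, hveig⟩ := eig_of_compact_not_unit _ hR0cpt (inv_ne_zero hlam0) hnu
  set w : W := lam • Binv v with hw
  have hιw : ι w = v := by
    rw [hw, map_smul, hBinv, hveig, smul_smul, mul_inv_cancel₀ hlam0, one_smul]
  refine ⟨lam⁻¹, ⟨w, ?_, ?_, ?_⟩, inv_ne_zero hlam0, (inv_inv lam).symm⟩
  · rw [hιw]; exact hv1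
  · rw [hw, norm_smul, hd]
    have h1 : ‖Binv v‖ ≤ ‖Binv‖ := by
      calc ‖Binv v‖ ≤ ‖Binv‖ * ‖v‖ := Binv.le_opNorm v
        _ = ‖Binv‖ := by rw [hv1, mul_one]
    have h2 : ‖lam‖ ≤ L := by simpa [mem_closedBall, dist_eq_norm] using hball
    exact mul_le_mul h2 h1 (norm_nonneg _) hL.le
  · rw [hιw, hveig, inner_smul_right, inner_self_eq_norm_sq_to_K, hv1]
    norm_num
end
end

section
/- Let A be a closed, densely defined operator on a complex Hilbert space H with 0 ∈ ρ(A) and D(A) ⊂ W ⊂ H for a continuously and densely embedded Hilbert space W, and suppose (P_n, A_n)_{n∈ℕ} approximates A uniformly. Let C₀ = sup_n (‖A_n⁻¹‖‖P_n‖ + 6‖A_n⁻¹‖‖P_n‖²), r > 0, 0 < ε < 1/‖A⁻¹‖ and ‖A⁻¹‖²ε/(1 − ‖A⁻¹‖ε) < δ ≤ ‖A⁻¹‖²ε/(1 − ‖A⁻¹‖ε) + (7/2)‖A⁻¹‖. If n₀ ∈ ℕ is such that for every n ≥ n₀, ‖A⁻¹ − A_n⁻¹P_n‖ + (r+ε)‖A⁻¹‖_{L(H,W)}·C₀·‖(I−P_n)|_W‖_{L(W,H)}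 < δ − ‖A⁻¹‖²ε/(1 − ‖A⁻¹‖ε), then σ_ε(A) ∩ {z : |z| ≤ r} ⊂ (B_δ(W(A_n⁻¹)))⁻¹ for all n ≥ n₀. -/
open Filter Topology Metric

noncomputable section

variable {H : Type*} [NormedAddCommGroup H] [InnerProductSpace ℂ H] [CompleteSpace H]

section Helpers

variable {H : Type*} [NormedAddCommGroup H] [InnerProductSpace ℂ H] [CompleteSpace H]

lemma resolventOf_spec {A : H →ₗ.[ℂ] H} {lam : ℂ} (h : lam ∈ presolventSet A) :
    IsResolventAt A lam (resolventOf A lam) := by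
  have h' : ∃ R, IsResolventAt A lam R := h
  rw [resolventOf, dif_pos h']
  exact h'.choose_spec

lemma resolventOf_eq_zero {A : H →ₗ.[ℂ] H} {lam : ℂ} (h : lam ∉ presolventSet A) :
    resolventOf A lam = 0 := by
  have h' : ¬ ∃ R, IsResolventAt A lam R := h
  rw [resolventOf, dif_neg h']

/-- Fredholm alternative for operators of finite rank: if `1 - F` is injective with
`F` of finite rank, then `1 - F` is surjective. -/
lemma fr_surjective {V : Submodule ℂ H} [FiniteDimensional ℂ V] (F : H →L[ℂ] H)
    (hF : ∀ x, F x ∈ V) (hinj : Function.Injective ⇑((1 : H →L[ℂ] H) - F)) :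
    Function.Surjective ⇑((1 : H →L[ℂ] H) - F) := by
  have happ : ∀ x : H, ((1 : H →L[ℂ] H) - F) x = x - F x := fun x => by
    simp [ContinuousLinearMap.sub_apply]
  intro y
  let φ : V →ₗ[ℂ] V :=
    { toFun := fun v => ⟨(v : H) - F v, V.sub_mem v.2 (hF v)⟩
      map_add' := by
        intro a b
        apply Subtype.ext
        simp only [Submodule.coe_add, map_add]
        push_cast
        abel
      map_smul' := by
        intro c a
        apply Subtype.ext
        simp only [Submodule.coe_smul, map_smul, RingHom.id_apply]
        push_cast
        rw [smul_sub] }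
  have hφinj : Function.Injective φ := by
    intro a b hab
    have h1 : (a : H) - F a = (b : H) - F b := congrArg Subtype.val hab
    have h2 : ((1 : H →L[ℂ] H) - F) a = ((1 : H →L[ℂ] H) - F) b := by
      rw [happ, happ, h1]
    exact Subtype.ext (hinj h2)
  have hφsurj : Function.Surjective φ := LinearMap.injective_iff_surjective.mp hφinj
  obtain ⟨w, hw⟩ := hφsurj ⟨F y, hF y⟩
  have hw' : (w : H) - F w = F y := congrArg Subtype.val hw
  refine ⟨y + w, ?_⟩
  rw [happ, map_add]
  have h3 : (y : H) + w - (F y + F w) = ((w : H) - F w) - F y + y := by abel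
  rw [h3, hw']
  abel

/-- A surjective bounded-below operator has a bounded inverse. -/
lemma exists_inverse (G : H →L[ℂ] H) (c : ℝ) (hc : 0 < c)
    (hlb : ∀ x, c * ‖x‖ ≤ ‖G x‖) (hsurj : Function.Surjective ⇑G) :
    ∃ J : H →L[ℂ] H, (∀ x, J (G x) = x) ∧ (∀ y, G (J y) = y) ∧ ∀ y, ‖J y‖ ≤ c⁻¹ * ‖y‖ := by
  have hinj : Function.Injective ⇑G := by
    intro a b hab
    have h1 := hlb (a - b)
    rw [map_sub, hab, sub_self, norm_zero] at h1
    have h2 : ‖a - b‖ ≤ 0 := by nlinarith [norm_nonneg (a - b)]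
    have h3 : a - b = 0 := norm_le_zero_iff.mp h2
    exact sub_eq_zero.mp h3
  let e := LinearEquiv.ofBijective (G : H →ₗ[ℂ] H) ⟨hinj, hsurj⟩
  have he : ∀ x, e x = G x := fun _ => rfl
  have hGe : ∀ y, G (e.symm y) = y := by
    intro y
    have := e.apply_symm_apply y
    rwa [he] at this
  have hbound : ∀ y, ‖(e.symm : H →ₗ[ℂ] H) y‖ ≤ c⁻¹ * ‖y‖ := by
    intro y
    have h1 := hlb (e.symm y)
    rw [hGe] at h1
    have h4 := mul_le_mul_of_nonneg_left h1 (inv_nonneg.mpr hc.le)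
    rwa [inv_mul_cancel_left₀ hc.ne'] at h4
  refine ⟨LinearMap.mkContinuous (e.symm : H →ₗ[ℂ] H) c⁻¹ hbound, ?_, ?_, ?_⟩
  · intro x
    have h5 : (e.symm) (G x) = x := by
      rw [← he x]; exact e.symm_apply_apply x
    exact h5
  · intro y; exact hGe y
  · intro y; exact hbound y

lemma norm_coe_inv_smul {E : Type*} [NormedAddCommGroup E] [NormedSpace ℂ E]
    {v : E} (hv : 0 < ‖v‖) : ‖((‖v‖ : ℂ))⁻¹ • v‖ = 1 := by
  rw [norm_smul, norm_inv, Complex.norm_real, Real.norm_eq_abs, abs_of_pos hv,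
    inv_mul_cancel₀ hv.ne']

lemma inner_normalized_sub_le (Bop : H →L[ℂ] H) (μ : ℂ) (ζ : H) (hζ : 0 < ‖ζ‖) :
    ‖(inner ℂ (((‖ζ‖ : ℂ))⁻¹ • ζ) (Bop (((‖ζ‖ : ℂ))⁻¹ • ζ)) : ℂ) - μ‖
      ≤ ‖ζ‖⁻¹ * ‖Bop ζ - μ • ζ‖ := by
  set c : ℂ := ((‖ζ‖ : ℝ) : ℂ) with hc
  set x := c⁻¹ • ζ with hxdef
  have hx1 : ‖x‖ = 1 := norm_coe_inv_smul hζ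
  have h1 : (inner ℂ x (Bop x) : ℂ) - μ = inner ℂ x (Bop x - μ • x) := by
    rw [inner_sub_right, inner_smul_right, inner_self_eq_norm_sq_to_K, hx1]
    push_cast
    ring
  rw [h1]
  have h2 : Bop x - μ • x = c⁻¹ • (Bop ζ - μ • ζ) := by
    rw [hxdef, map_smul, smul_sub, smul_comm μ c⁻¹]
  rw [h2]
  calc ‖(inner ℂ x (c⁻¹ • (Bop ζ - μ • ζ)) : ℂ)‖
      ≤ ‖x‖ * ‖c⁻¹ • (Bop ζ - μ • ζ)‖ := norm_inner_le_norm _ _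
  _ = ‖ζ‖⁻¹ * ‖Bop ζ - μ • ζ‖ := by
      rw [hx1, one_mul, norm_smul, norm_inv, hc, Complex.norm_real, Real.norm_eq_abs,
        abs_of_pos hζ]

end Helpers

set_option maxHeartbeats 4000000 in
/-- Proposition 4.9. -/
theorem pseudospectrum_inter_ball_subset_inv_nbhd_of_uniform
    (A : H →ₗ.[ℂ] H)
    (hclosed : IsClosed (A.graph : Set (H × H)))
    (hdense : Dense (A.domain : Set H))
    (h0 : (0 : ℂ) ∈ presolventSet A)
    {W : Type*} [NormedAddCommGroup W] [InnerProductSpace ℂ W] [CompleteSpace W]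
    (ι : W →L[ℂ] H) (hιinj : Function.Injective ι) (hιdense : DenseRange ι)
    (hdom : (A.domain : Set H) ⊆ Set.range ι)
    (U : ℕ → Submodule ℂ H) (hUfin : ∀ n, FiniteDimensional ℂ (U n))
    (P : ℕ → H →L[ℂ] H)
    (hPmem : ∀ n x, P n x ∈ U n)
    (hPproj : ∀ n, ∀ x ∈ U n, P n x = x)
    (hPbdd : ∃ C : ℝ, ∀ n, ‖P n‖ ≤ C)
    (hPW : Tendsto (fun n => ‖ι - (P n).comp ι‖) atTop (𝓝 0))
    (T : ∀ n, ↥(U n) →L[ℂ] ↥(U n)) (Tinv : ∀ n, ↥(U n) →L[ℂ] ↥(U n))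
    (hTinv : ∀ n, (∀ u, Tinv n (T n u) = u) ∧ ∀ u, T n (Tinv n u) = u)
    (hunif : Tendsto (fun n =>
      ‖resolventOf A 0 -
        (U n).subtypeL.comp ((Tinv n).comp ((P n).codRestrict (U n) (hPmem n)))‖)
      atTop (𝓝 0))
    (Binv : H →L[ℂ] W) (hBinv : ∀ x, ι (Binv x) = resolventOf A 0 x)
    (C₀ : ℝ)
    (hC₀ : C₀ = sSup (Set.range fun n =>
      ‖Tinv n‖ * ‖P n‖ + 6 * ‖Tinv n‖ * ‖P n‖ ^ 2))
    (r : ℝ) (hr : 0 < r)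
    (ε : ℝ) (hε0 : 0 < ε) (hε : ε < 1 / ‖resolventOf A 0‖)
    (δ : ℝ)
    (hδ1 : ‖resolventOf A 0‖ ^ 2 * ε / (1 - ‖resolventOf A 0‖ * ε) < δ)
    (hδ2 : δ ≤ ‖resolventOf A 0‖ ^ 2 * ε / (1 - ‖resolventOf A 0‖ * ε) +
      7 / 2 * ‖resolventOf A 0‖)
    (n₀ : ℕ)
    (hn₀ : ∀ n ≥ n₀,
      ‖resolventOf A 0 -
          (U n).subtypeL.comp
            ((Tinv n).comp ((P n).codRestrict (U n) (hPmem n)))‖ +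
        (r + ε) * ‖Binv‖ * C₀ * ‖ι - (P n).comp ι‖ <
        δ - ‖resolventOf A 0‖ ^ 2 * ε / (1 - ‖resolventOf A 0‖ * ε)) :
    ∀ n ≥ n₀,
      pseudoSpectrum ε A ∩ Metric.closedBall 0 r ⊆
        invSet (nbhdSet δ (numRangeSub (Tinv n))) := by
  intro n hn lam hlam
  obtain ⟨hps, hball⟩ := hlam
  set B := resolventOf A 0 with hBdef
  have hB : IsResolventAt A 0 B := resolventOf_spec h0
  have hB1 : ∀ x : A.domain, B (A x) = (x : H) := by
    intro x
    have h := hB.1 x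
    rwa [zero_smul, sub_zero] at h
  have hB2 : ∀ y : H, ∃ hy : B y ∈ A.domain, A ⟨B y, hy⟩ = y := by
    intro y
    obtain ⟨hy, h⟩ := hB.2 y
    rw [zero_smul, sub_zero] at h
    exact ⟨hy, h⟩
  have hBpos : 0 < ‖B‖ := by
    rcases (norm_nonneg B).lt_or_eq with h | h
    · exact h
    · exfalso
      rw [← h] at hε
      norm_num at hε
      linarith
  have hεB : ‖B‖ * ε < 1 := by
    rw [lt_div_iff₀ hBpos] at hε
    linarith
  set εt := ‖B‖ ^ 2 * ε / (1 - ‖B‖ * ε) with hεtdef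
  have hεtpos : 0 < εt := by
    apply div_pos (by positivity) (by linarith)
  have hlamr : ‖lam‖ ≤ r := by
    rw [Metric.mem_closedBall, dist_zero_right] at hball
    exact hball
  -- the finite-rank approximations
  set S : ℕ → H →L[ℂ] H :=
    (fun m => (U m).subtypeL.comp ((Tinv m).comp ((P m).codRestrict (U m) (hPmem m))))
    with hSdef
  have hSapp : ∀ m x, S m x = ((Tinv m (((P m).codRestrict (U m) (hPmem m)) x) : U m) : H) :=
    fun m x => rfl
  have hSmem : ∀ m x, S m x ∈ U m := by
    intro m x
    rw [hSapp]
    exact SetLike.coe_mem _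
  have hβ0 : Tendsto (fun m => ‖B - S m‖) atTop (𝓝 0) := by
    simp only [hSdef]
    exact hunif
  have hkey : ‖B - S n‖ + (r + ε) * ‖Binv‖ * C₀ * ‖ι - (P n).comp ι‖ < δ - εt := by
    simp only [hSdef, hεtdef]
    exact hn₀ n hn
  -- norms of the approximations
  have hcodR : ∀ m (u : U m), ((P m).codRestrict (U m) (hPmem m)) (u : H) = u := by
    intro m u
    apply Subtype.ext
    exact hPproj m (u : H) u.2
  have hTleS : ∀ m, ‖Tinv m‖ ≤ ‖S m‖ := by
    intro m
    apply ContinuousLinearMap.opNorm_le_bound _ (norm_nonneg _)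
    intro u
    have h1 : S m (u : H) = ((Tinv m u : U m) : H) := by
      rw [hSapp, hcodR]
    have h2 : ‖Tinv m u‖ = ‖S m (u : H)‖ := by rw [h1]; rfl
    rw [h2]
    calc ‖S m (u : H)‖ ≤ ‖S m‖ * ‖(u : H)‖ := (S m).le_opNorm _
    _ = ‖S m‖ * ‖u‖ := rfl
  have hSleTP : ∀ m, ‖S m‖ ≤ ‖Tinv m‖ * ‖P m‖ := by
    intro m
    apply ContinuousLinearMap.opNorm_le_bound _ (by positivity)
    intro x
    rw [hSapp]
    have h1 : ‖((Tinv m (((P m).codRestrict (U m) (hPmem m)) x) : U m) : H)‖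
        = ‖Tinv m (((P m).codRestrict (U m) (hPmem m)) x)‖ := rfl
    rw [h1]
    calc ‖Tinv m (((P m).codRestrict (U m) (hPmem m)) x)‖
        ≤ ‖Tinv m‖ * ‖((P m).codRestrict (U m) (hPmem m)) x‖ := (Tinv m).le_opNorm _
    _ = ‖Tinv m‖ * ‖P m x‖ := rfl
    _ ≤ ‖Tinv m‖ * (‖P m‖ * ‖x‖) := by
        have := (P m).le_opNorm x
        exact mul_le_mul_of_nonneg_left this (Tinv m).opNorm_nonneg
    _ = ‖Tinv m‖ * ‖P m‖ * ‖x‖ := by ring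
  have hSB : ∀ m, ‖S m‖ ≤ ‖B‖ + ‖B - S m‖ := by
    intro m
    calc ‖S m‖ = ‖B - (B - S m)‖ := by rw [sub_sub_cancel]
    _ ≤ ‖B‖ + ‖B - S m‖ := norm_sub_le _ _
  set cf : ℕ → ℝ := (fun m => ‖Tinv m‖ * ‖P m‖ + 6 * ‖Tinv m‖ * ‖P m‖ ^ 2) with hcfdef
  have hcf0 : ∀ m, 0 ≤ cf m := by
    intro m; rw [hcfdef]; positivity
  have h7S : ∀ m, 7 * ‖S m‖ ≤ cf m := by
    intro m
    by_cases hU : ∃ u0 : H, u0 ∈ U m ∧ u0 ≠ 0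
    · obtain ⟨u0, hu0m, hu00⟩ := hU
      have hP1 : 1 ≤ ‖P m‖ := by
        have h1 : P m u0 = u0 := hPproj m u0 hu0m
        have h2 : ‖u0‖ ≤ ‖P m‖ * ‖u0‖ := by
          conv_lhs => rw [← h1]
          exact (P m).le_opNorm u0
        have h3 : 0 < ‖u0‖ := norm_pos_iff.mpr hu00
        nlinarith
      have h4 := hSleTP m
      have h5 : 0 ≤ ‖Tinv m‖ := (Tinv m).opNorm_nonneg
      have h6 : ‖Tinv m‖ * ‖P m‖ * 1 ≤ ‖Tinv m‖ * ‖P m‖ * ‖P m‖ :=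
        mul_le_mul_of_nonneg_left hP1 (mul_nonneg h5 (norm_nonneg (P m)))
      have h7 : (S m).opNorm ≤ ‖Tinv m‖ * ‖P m‖ := h4
      show 7 * ‖S m‖ ≤ ‖Tinv m‖ * ‖P m‖ + 6 * ‖Tinv m‖ * ‖P m‖ ^ 2
      nlinarith [(S m).opNorm_nonneg]
    · -- U m is trivial, so S m = 0
      push_neg at hU
      have hS0 : S m = 0 := by
        ext x
        have h1 : S m x ∈ U m := hSmem m x
        rcases eq_or_ne (S m x) 0 with h | h
        · simpa using h
        · exact absurd (hU _ h1) (by simp [h])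
      rw [hS0, norm_zero, mul_zero]
      exact hcf0 m
  have hcfBdd : BddAbove (Set.range cf) := by
    obtain ⟨Cp, hCp⟩ := hPbdd
    have hCp0 : 0 ≤ Cp := le_trans (norm_nonneg _) (hCp 0)
    have hβbdd : BddAbove (Set.range fun m => ‖B - S m‖) := hβ0.bddAbove_range
    obtain ⟨Mβ, hMβ⟩ := hβbdd
    refine ⟨(‖B‖ + Mβ) * Cp + 6 * (‖B‖ + Mβ) * Cp ^ 2, ?_⟩
    rintro _ ⟨m, rfl⟩
    have h1 : ‖B - S m‖ ≤ Mβ := hMβ ⟨m, rfl⟩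
    have h2 : ‖Tinv m‖ ≤ ‖B‖ + Mβ := le_trans (hTleS m) (le_trans (hSB m) (by linarith))
    have h3 : ‖P m‖ ≤ Cp := hCp m
    have h4 : 0 ≤ ‖Tinv m‖ := (Tinv m).opNorm_nonneg
    have h5 : 0 ≤ ‖P m‖ := norm_nonneg (P m)
    have h6 : 0 ≤ ‖B‖ + Mβ := le_trans h4 h2
    show ‖Tinv m‖ * ‖P m‖ + 6 * ‖Tinv m‖ * ‖P m‖ ^ 2 ≤ (‖B‖ + Mβ) * Cp + 6 * (‖B‖ + Mβ) * Cp ^ 2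
    have h7 : ‖Tinv m‖ * ‖P m‖ ≤ (‖B‖ + Mβ) * Cp := mul_le_mul h2 h3 h5 h6
    have h8 : ‖P m‖ ^ 2 ≤ Cp ^ 2 := by nlinarith
    have h9 : ‖Tinv m‖ * ‖P m‖ ^ 2 ≤ (‖B‖ + Mβ) * Cp ^ 2 :=
      mul_le_mul h2 h8 (by positivity) h6
    linarith
  have hcfC₀ : ∀ m, cf m ≤ C₀ := by
    intro m
    rw [hC₀]
    exact le_csSup hcfBdd ⟨m, rfl⟩
  have hC₀B : 7 * ‖B‖ ≤ C₀ := by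
    have h1 : ∀ m, 7 * ‖B‖ - 7 * ‖B - S m‖ ≤ C₀ := by
      intro m
      have := h7S m
      have h2 : ‖B‖ - ‖B - S m‖ ≤ ‖S m‖ := by
        have := norm_sub_le B (B - S m)
        calc ‖B‖ - ‖B - S m‖ ≤ ‖B - (B - S m)‖ := by
              linarith [norm_sub_norm_le B (B - S m), norm_sub_le (B - S m) B]
        _ = ‖S m‖ := by rw [sub_sub_cancel]
      linarith [hcfC₀ m]
    have h3 : Tendsto (fun m => 7 * ‖B‖ - 7 * ‖B - S m‖) atTop (𝓝 (7 * ‖B‖ - 7 * 0)) := by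
      exact (tendsto_const_nhds.sub (hβ0.const_mul 7))
    rw [mul_zero, sub_zero] at h3
    exact le_of_tendsto h3 (Filter.Eventually.of_forall h1)
  have hC₀0 : 0 ≤ C₀ := le_trans (by positivity) hC₀B
  have hrε : 0 < r + ε := by linarith
  have hbig : lam ≠ 0 ∧ (1 - ε * ‖B‖ < ‖lam‖ * ‖B‖) ∧
      ∃ x : H, ‖x‖ = 1 ∧
        ‖x - P n x‖ ≤ (r + ε) * (‖Binv‖ * ‖ι - (P n).comp ι‖) ∧
        ‖(inner ℂ x (B x) : ℂ) - lam⁻¹‖ < εt := by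
    rcases hps with hsing | hres
    · -- singular case : lam is not in the resolvent set
      have hlam0 : lam ≠ 0 := fun h => hsing (h ▸ h0)
      have happrox : ∀ c, 0 < c → ∃ x : H, ‖x‖ = 1 ∧ ‖x - lam • B x‖ < c := by
        by_contra hcon
        push_neg at hcon
        obtain ⟨c, hc, hbel⟩ := hcon
        have hlb : ∀ x : H, c * ‖x‖ ≤ ‖x - lam • B x‖ := by
          intro x
          rcases eq_or_ne x 0 with rfl | hx0
          · simp
          · have hxn : 0 < ‖x‖ := norm_pos_iff.mpr hx0
            have h1 := hbel (((‖x‖ : ℂ))⁻¹ • x) (norm_coe_inv_smul hxn)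
            have h2 : ((‖x‖ : ℂ))⁻¹ • x - lam • B (((‖x‖ : ℂ))⁻¹ • x)
                = ((‖x‖ : ℂ))⁻¹ • (x - lam • B x) := by
              rw [map_smul, smul_sub, smul_comm lam]
            rw [h2, norm_smul, norm_inv, Complex.norm_real, Real.norm_eq_abs,
              abs_of_pos hxn] at h1
            calc c * ‖x‖ ≤ (‖x‖⁻¹ * ‖x - lam • B x‖) * ‖x‖ :=
                  mul_le_mul_of_nonneg_right h1 (norm_nonneg x)
            _ = ‖x - lam • B x‖ := by field_simp
        obtain ⟨n₁, hn₁⟩ := (hβ0.eventually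
          (gt_mem_nhds (show (0:ℝ) < c / (3 * (‖lam‖ + 1)) by positivity))).exists
        have hDb : ‖lam‖ * ‖B - S n₁‖ ≤ c / 3 := by
          have h1 : ‖lam‖ * ‖B - S n₁‖ ≤ ‖lam‖ * (c / (3 * (‖lam‖ + 1))) :=
            mul_le_mul_of_nonneg_left hn₁.le (norm_nonneg lam)
          have h2 : ‖lam‖ * (c / (3 * (‖lam‖ + 1))) ≤ c / 3 := by
            rw [← mul_div_assoc, div_le_div_iff₀ (by positivity) (by norm_num : (0:ℝ) < 3)]
            nlinarith [norm_nonneg lam, mul_nonneg (norm_nonneg lam) hc.le]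
          linarith
        set G := (1 : H →L[ℂ] H) - lam • S n₁ with hGdef
        have hGapp : ∀ x : H, G x = x - lam • S n₁ x := by
          intro x
          rw [hGdef, ContinuousLinearMap.sub_apply, ContinuousLinearMap.one_apply,
            ContinuousLinearMap.smul_apply]
        have hE : ∀ x : H, x - lam • B x = G x - lam • ((B - S n₁) x) := by
          intro x
          rw [hGapp, ContinuousLinearMap.sub_apply, smul_sub]
          abel
        have hGlb : ∀ x : H, 2 * c / 3 * ‖x‖ ≤ ‖G x‖ := by
          intro x
          have h1 := hlb x
          have h2 : ‖lam • ((B - S n₁) x)‖ ≤ c / 3 * ‖x‖ := by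
            rw [norm_smul]
            calc ‖lam‖ * ‖(B - S n₁) x‖ ≤ ‖lam‖ * (‖B - S n₁‖ * ‖x‖) :=
                  mul_le_mul_of_nonneg_left ((B - S n₁).le_opNorm x) (norm_nonneg lam)
            _ = ‖lam‖ * ‖B - S n₁‖ * ‖x‖ := by ring
            _ ≤ c / 3 * ‖x‖ := mul_le_mul_of_nonneg_right hDb (norm_nonneg x)
          have h3 : ‖x - lam • B x‖ ≤ ‖G x‖ + ‖lam • ((B - S n₁) x)‖ := by
            rw [hE x]
            exact norm_sub_le _ _
          linarith
        have hGinj : Function.Injective ⇑G := by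
          intro a b hab
          have h1 := hGlb (a - b)
          rw [map_sub, hab, sub_self, norm_zero] at h1
          have h2 : ‖a - b‖ ≤ 0 := by nlinarith [norm_nonneg (a - b)]
          exact sub_eq_zero.mp (norm_le_zero_iff.mp h2)
        haveI := hUfin n₁
        have hGsurj : Function.Surjective ⇑G := by
          have hF : ∀ x : H, (lam • S n₁) x ∈ U n₁ := fun x => by
            rw [ContinuousLinearMap.smul_apply]
            exact Submodule.smul_mem _ _ (hSmem n₁ x)
          exact fr_surjective (V := U n₁) (lam • S n₁) hF hGinj
        obtain ⟨J, hJG, hGJ, hJn⟩ := exists_inverse G (2 * c / 3) (by positivity) hGlb hGsurj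
        set D := lam • (B - S n₁) with hDdef
        have hDx : ∀ x : H, D x = lam • ((B - S n₁) x) := fun x => rfl
        have hDn : ‖D‖ ≤ c / 3 := by
          rw [hDdef, norm_smul]
          exact hDb
        have hJD1 : ‖J.comp D‖ < 1 := by
          have h4 : ‖J.comp D‖ ≤ 1 / 2 := by
            apply ContinuousLinearMap.opNorm_le_bound _ (by norm_num)
            intro x
            calc ‖J (D x)‖ ≤ (2 * c / 3)⁻¹ * ‖D x‖ := hJn _
            _ ≤ (2 * c / 3)⁻¹ * (c / 3 * ‖x‖) := by
                apply mul_le_mul_of_nonneg_left _ (by positivity)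
                calc ‖D x‖ ≤ ‖D‖ * ‖x‖ := D.le_opNorm x
                _ ≤ c / 3 * ‖x‖ := mul_le_mul_of_nonneg_right hDn (norm_nonneg x)
            _ = 1 / 2 * ‖x‖ := by
                field_simp
          linarith
        set uU := Units.oneSub (J.comp D) hJD1 with huU
        set K := (1 : H →L[ℂ] H) - J.comp D with hKdef
        have hKval : (uU : H →L[ℂ] H) = K := rfl
        set K' := ((uU⁻¹ : (H →L[ℂ] H)ˣ) : H →L[ℂ] H) with hK'def
        have hKK' : ∀ x : H, K (K' x) = x := by
          intro x
          have h1 : K * K' = 1 := by rw [← hKval, hK'def]; exact uU.mul_inv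
          calc K (K' x) = (K * K') x := (ContinuousLinearMap.mul_apply K K' x).symm
          _ = x := by rw [h1]; rfl
        have hK'K : ∀ x : H, K' (K x) = x := by
          intro x
          have h1 : K' * K = 1 := by rw [← hKval, hK'def]; exact uU.inv_mul
          calc K' (K x) = (K' * K) x := (ContinuousLinearMap.mul_apply K' K x).symm
          _ = x := by rw [h1]; rfl
        have hKx : ∀ x : H, K x = x - J (D x) := by
          intro x
          rw [hKdef, ContinuousLinearMap.sub_apply, ContinuousLinearMap.one_apply,
            ContinuousLinearMap.comp_apply]
        have hEG : ∀ x : H, x - lam • B x = G (K x) := by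
          intro x
          rw [hE x, hKx, map_sub, hGJ (D x), hDx]
        set Jf := K'.comp J with hJfdef
        have hJfx : ∀ x : H, Jf x = K' (J x) := fun x => rfl
        have hJf1 : ∀ v : H, Jf (v - lam • B v) = v := by
          intro v
          rw [hEG v, hJfx, hJG (K v), hK'K]
        have hJf2 : ∀ y : H, Jf y - lam • B (Jf y) = y := by
          intro y
          rw [hEG (Jf y), hJfx, hKK' (J y), hGJ]
        exact hsing ⟨B.comp Jf, by
          intro x
          show B (Jf ((A x : H) - lam • (x : H))) = (x : H)
          have h1 : (A x : H) - lam • (x : H) = (A x : H) - lam • B (A x) := by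
            rw [hB1 x]
          rw [h1, hJf1 (A x)]
          exact hB1 x, by
          intro y
          obtain ⟨hy, hAy⟩ := hB2 (Jf y)
          refine ⟨hy, ?_⟩
          show (A ⟨B (Jf y), hy⟩ : H) - lam • B (Jf y) = y
          rw [hAy]
          exact hJf2 y⟩
      have hlamB1 : 1 ≤ ‖lam‖ * ‖B‖ := by
        by_contra hcon
        push_neg at hcon
        obtain ⟨x, hx1, hx2⟩ := happrox (1 - ‖lam‖ * ‖B‖) (by linarith)
        have h1 : ‖lam • B x‖ ≤ ‖lam‖ * ‖B‖ := by
          rw [norm_smul]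
          calc ‖lam‖ * ‖B x‖ ≤ ‖lam‖ * (‖B‖ * ‖x‖) :=
                mul_le_mul_of_nonneg_left (B.le_opNorm x) (norm_nonneg lam)
          _ = ‖lam‖ * ‖B‖ := by rw [hx1, mul_one]
        have h2 : ‖x‖ ≤ ‖x - lam • B x‖ + ‖lam • B x‖ := by
          calc ‖x‖ = ‖x - lam • B x + lam • B x‖ := by rw [sub_add_cancel]
          _ ≤ ‖x - lam • B x‖ + ‖lam • B x‖ := norm_add_le _ _
        rw [hx1] at h2
        linarith
      refine ⟨hlam0, by nlinarith [mul_pos hε0 hBpos], ?_⟩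
      -- choose the accuracy η
      set η := min (ε / (r + ε)) (εt / (εt + ‖B‖)) / 2 with hηdef
      have hmin0 : 0 < min (ε / (r + ε)) (εt / (εt + ‖B‖)) :=
        lt_min (div_pos hε0 hrε) (div_pos hεtpos (by positivity))
      have hη1 : 0 < η := by rw [hηdef]; positivity
      have hηa : η < ε / (r + ε) :=
        lt_of_lt_of_le (by rw [hηdef]; exact half_lt_self hmin0) (min_le_left _ _)
      have hηb : η < εt / (εt + ‖B‖) :=
        lt_of_lt_of_le (by rw [hηdef]; exact half_lt_self hmin0) (min_le_right _ _)
      have hη2 : η < 1 := by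
        apply lt_of_lt_of_le hηa
        rw [div_le_one hrε]
        linarith
      obtain ⟨x₀, hx₀1, hx₀2⟩ := happrox η hη1
      set ζ := lam • B x₀ with hζdef
      have hζlb : 1 - η < ‖ζ‖ := by
        have h1 := norm_sub_norm_le x₀ ζ
        rw [hx₀1] at h1
        linarith [hx₀2]
      have hζpos : 0 < ‖ζ‖ := by linarith
      set z := lam • x₀ with hzdef
      have hBz : B z = ζ := by rw [hzdef, map_smul, hζdef]
      have hznorm : ‖z‖ ≤ r := by
        rw [hzdef, norm_smul, hx₀1, mul_one]
        exact hlamr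
      refine ⟨((‖ζ‖ : ℂ))⁻¹ • ζ, norm_coe_inv_smul hζpos, ?_, ?_⟩
      · -- projection estimate
        have h1 : ζ - P n ζ = (ι - (P n).comp ι) (Binv z) := by
          rw [ContinuousLinearMap.sub_apply, ContinuousLinearMap.comp_apply, hBinv z, hBz]
        have h2 : ((‖ζ‖ : ℂ))⁻¹ • ζ - P n (((‖ζ‖ : ℂ))⁻¹ • ζ)
            = ((‖ζ‖ : ℂ))⁻¹ • (ζ - P n ζ) := by
          rw [map_smul, smul_sub]
        rw [h2, h1, norm_smul, norm_inv, Complex.norm_real, Real.norm_eq_abs, abs_of_pos hζpos]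
        have h3 : ‖(ι - (P n).comp ι) (Binv z)‖ ≤ ‖ι - (P n).comp ι‖ * (‖Binv‖ * r) := by
          calc ‖(ι - (P n).comp ι) (Binv z)‖ ≤ ‖ι - (P n).comp ι‖ * ‖Binv z‖ :=
                (ι - (P n).comp ι).le_opNorm _
          _ ≤ ‖ι - (P n).comp ι‖ * (‖Binv‖ * ‖z‖) :=
                mul_le_mul_of_nonneg_left (Binv.le_opNorm z) (norm_nonneg _)
          _ ≤ ‖ι - (P n).comp ι‖ * (‖Binv‖ * r) := by
                apply mul_le_mul_of_nonneg_left _ (norm_nonneg _)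
                exact mul_le_mul_of_nonneg_left hznorm (norm_nonneg _)
        have h4 : ‖ζ‖⁻¹ * r ≤ r + ε := by
          rw [inv_mul_le_iff₀ hζpos]
          have h5 : (r + ε) * (1 - η) ≤ (r + ε) * ‖ζ‖ :=
            mul_le_mul_of_nonneg_left hζlb.le (by linarith)
          have h6 : (r + ε) * η < ε := by
            rw [← lt_div_iff₀' hrε]
            exact hηa
          nlinarith
        calc ‖ζ‖⁻¹ * ‖(ι - (P n).comp ι) (Binv z)‖
            ≤ ‖ζ‖⁻¹ * (‖ι - (P n).comp ι‖ * (‖Binv‖ * r)) :=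
              mul_le_mul_of_nonneg_left h3 (by positivity)
        _ = (‖ζ‖⁻¹ * r) * (‖Binv‖ * ‖ι - (P n).comp ι‖) := by ring
        _ ≤ (r + ε) * (‖Binv‖ * ‖ι - (P n).comp ι‖) :=
              mul_le_mul_of_nonneg_right h4 (by positivity)
      · -- inner product estimate
        have h1 := inner_normalized_sub_le B lam⁻¹ ζ hζpos
        have h2 : B ζ - lam⁻¹ • ζ = B (lam • B x₀ - x₀) := by
          rw [map_sub, hζdef, smul_smul, inv_mul_cancel₀ hlam0, one_smul]
        have h3 : ‖B ζ - lam⁻¹ • ζ‖ ≤ ‖B‖ * η := by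
          rw [h2]
          calc ‖B (lam • B x₀ - x₀)‖ ≤ ‖B‖ * ‖lam • B x₀ - x₀‖ := B.le_opNorm _
          _ ≤ ‖B‖ * η := by
              apply mul_le_mul_of_nonneg_left _ (norm_nonneg _)
              rw [← norm_neg]
              simp only [neg_sub]
              exact hx₀2.le
        have h4 : ‖ζ‖⁻¹ * ‖B ζ - lam⁻¹ • ζ‖ < εt := by
          have h5 : ‖ζ‖⁻¹ * ‖B ζ - lam⁻¹ • ζ‖ ≤ ‖ζ‖⁻¹ * (‖B‖ * η) :=
            mul_le_mul_of_nonneg_left h3 (by positivity)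
          have h6 : ‖ζ‖⁻¹ * (‖B‖ * η) < εt := by
            rw [inv_mul_lt_iff₀ hζpos]
            have h7 : η * (εt + ‖B‖) < εt := by
              rw [← lt_div_iff₀ (by positivity)]
              exact hηb
            nlinarith
          linarith
        exact lt_of_le_of_lt h1 h4
    · -- resolvent case
      have hmem : lam ∈ presolventSet A := by
        by_contra hmem
        rw [resolventOf_eq_zero hmem, norm_zero] at hres
        have h0' : (0:ℝ) < 1 / ε := by positivity
        linarith
      set R := resolventOf A lam with hRdef
      have hR : IsResolventAt A lam R := resolventOf_spec hmem
      have hRnorm : 1 / ε < ‖R‖ := hres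
      have hRpos : 0 < ‖R‖ := lt_trans (by positivity) hRnorm
      have hid1 : ∀ y : H, R y = B y + lam • B (R y) := by
        intro y
        obtain ⟨hy, hAy⟩ := hR.2 y
        have h1 : (A ⟨R y, hy⟩ : H) = y + lam • R y := sub_eq_iff_eq_add.mp hAy
        have h2 := hB1 ⟨R y, hy⟩
        rw [h1, map_add, map_smul] at h2
        exact h2.symm
      have hlam0 : lam ≠ 0 := by
        intro h
        subst h
        rw [hRdef, ← hBdef] at hRnorm
        rw [div_lt_iff₀ hε0] at hRnorm
        nlinarith
      have hRle : ‖R‖ ≤ ‖B‖ + ‖lam‖ * ‖B‖ * ‖R‖ := by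
        apply ContinuousLinearMap.opNorm_le_bound _ (by positivity)
        intro y
        calc ‖R y‖ = ‖B y + lam • B (R y)‖ := by rw [← hid1 y]
        _ ≤ ‖B y‖ + ‖lam • B (R y)‖ := norm_add_le _ _
        _ = ‖B y‖ + ‖lam‖ * ‖B (R y)‖ := by rw [norm_smul]
        _ ≤ ‖B‖ * ‖y‖ + ‖lam‖ * (‖B‖ * ‖R y‖) :=
            add_le_add (B.le_opNorm y)
              (mul_le_mul_of_nonneg_left (B.le_opNorm (R y)) (norm_nonneg lam))
        _ ≤ ‖B‖ * ‖y‖ + ‖lam‖ * (‖B‖ * (‖R‖ * ‖y‖)) := by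
            have h3 : ‖R y‖ ≤ ‖R‖ * ‖y‖ := R.le_opNorm y
            have h4 : 0 ≤ ‖lam‖ * ‖B‖ := by positivity
            nlinarith [norm_nonneg lam, norm_nonneg (B : H →L[ℂ] H)]
        _ = (‖B‖ + ‖lam‖ * ‖B‖ * ‖R‖) * ‖y‖ := by ring
      have hlamlb : 1 - ε * ‖B‖ < ‖lam‖ * ‖B‖ := by
        by_contra hcon
        push_neg at hcon
        have h1 : 1 < ‖R‖ * ε := by
          rw [div_lt_iff₀ hε0] at hRnorm
          linarith
        nlinarith
      refine ⟨hlam0, hlamlb, ?_⟩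
      obtain ⟨u, hu1, hu2⟩ := R.exists_lt_apply_of_lt_opNorm hRnorm
      set ζ := R u with hζdef
      have hζpos : 0 < ‖ζ‖ := lt_trans (by positivity) hu2
      have hζε : 1 < ε * ‖ζ‖ := by
        rw [div_lt_iff₀ hε0] at hu2
        nlinarith
      set z := u + lam • R u with hzdef
      have hBz : B z = ζ := by
        rw [hzdef, map_add, map_smul]
        exact (hid1 u).symm
      have hznorm : ‖z‖ ≤ (r + ε) * ‖ζ‖ := by
        calc ‖z‖ ≤ ‖u‖ + ‖lam • ζ‖ := norm_add_le _ _
        _ = ‖u‖ + ‖lam‖ * ‖ζ‖ := by rw [norm_smul]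
        _ ≤ 1 + r * ‖ζ‖ :=
            add_le_add hu1.le (mul_le_mul_of_nonneg_right hlamr (norm_nonneg ζ))
        _ ≤ ε * ‖ζ‖ + r * ‖ζ‖ := by linarith
        _ = (r + ε) * ‖ζ‖ := by ring
      refine ⟨((‖ζ‖ : ℂ))⁻¹ • ζ, norm_coe_inv_smul hζpos, ?_, ?_⟩
      · have h1 : ζ - P n ζ = (ι - (P n).comp ι) (Binv z) := by
          rw [ContinuousLinearMap.sub_apply, ContinuousLinearMap.comp_apply, hBinv z, hBz]
        have h2 : ((‖ζ‖ : ℂ))⁻¹ • ζ - P n (((‖ζ‖ : ℂ))⁻¹ • ζ)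
            = ((‖ζ‖ : ℂ))⁻¹ • (ζ - P n ζ) := by
          rw [map_smul, smul_sub]
        rw [h2, h1, norm_smul, norm_inv, Complex.norm_real, Real.norm_eq_abs, abs_of_pos hζpos]
        have h3 : ‖(ι - (P n).comp ι) (Binv z)‖
            ≤ ‖ι - (P n).comp ι‖ * (‖Binv‖ * ((r + ε) * ‖ζ‖)) := by
          calc ‖(ι - (P n).comp ι) (Binv z)‖ ≤ ‖ι - (P n).comp ι‖ * ‖Binv z‖ :=
                (ι - (P n).comp ι).le_opNorm _
          _ ≤ ‖ι - (P n).comp ι‖ * (‖Binv‖ * ‖z‖) :=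
                mul_le_mul_of_nonneg_left (Binv.le_opNorm z) (norm_nonneg _)
          _ ≤ ‖ι - (P n).comp ι‖ * (‖Binv‖ * ((r + ε) * ‖ζ‖)) := by
                apply mul_le_mul_of_nonneg_left _ (norm_nonneg _)
                exact mul_le_mul_of_nonneg_left hznorm (norm_nonneg _)
        calc ‖ζ‖⁻¹ * ‖(ι - (P n).comp ι) (Binv z)‖
            ≤ ‖ζ‖⁻¹ * (‖ι - (P n).comp ι‖ * (‖Binv‖ * ((r + ε) * ‖ζ‖))) :=
              mul_le_mul_of_nonneg_left h3 (by positivity)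
        _ = (r + ε) * (‖Binv‖ * ‖ι - (P n).comp ι‖) := by
              field_simp
      · have h1 := inner_normalized_sub_le B lam⁻¹ ζ hζpos
        apply lt_of_le_of_lt h1
        have h3' := hid1 u
        rw [← hζdef] at h3'
        have h4 : lam • B ζ = ζ - B u := by
          rw [eq_sub_iff_add_eq, add_comm]
          exact h3'.symm
        have h2 : B ζ - lam⁻¹ • ζ = -(lam⁻¹) • B u := by
          calc B ζ - lam⁻¹ • ζ = lam⁻¹ • (lam • B ζ) - lam⁻¹ • ζ := by
                rw [smul_smul, inv_mul_cancel₀ hlam0, one_smul]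
          _ = lam⁻¹ • (ζ - B u) - lam⁻¹ • ζ := by rw [h4]
          _ = -(lam⁻¹) • B u := by
                rw [smul_sub, neg_smul]
                abel
        have h5 : ‖B ζ - lam⁻¹ • ζ‖ ≤ ‖lam‖⁻¹ * ‖B‖ := by
          rw [h2, norm_smul, norm_neg, norm_inv]
          apply mul_le_mul_of_nonneg_left _ (by positivity)
          calc ‖B u‖ ≤ ‖B‖ * ‖u‖ := B.le_opNorm u
          _ ≤ ‖B‖ * 1 := mul_le_mul_of_nonneg_left hu1.le (norm_nonneg _)
          _ = ‖B‖ := mul_one _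
        have hlamp : 0 < ‖lam‖ := norm_pos_iff.mpr hlam0
        have hpε : ‖ζ‖⁻¹ < ε := by
          have h6 : ‖ζ‖⁻¹ * 1 < ‖ζ‖⁻¹ * (ε * ‖ζ‖) :=
            mul_lt_mul_of_pos_left hζε (by positivity)
          rw [mul_one] at h6
          calc ‖ζ‖⁻¹ < ‖ζ‖⁻¹ * (ε * ‖ζ‖) := h6
          _ = ε := by field_simp
        have hq : ‖lam‖⁻¹ < ‖B‖ / (1 - ‖B‖ * ε) := by
          rw [lt_div_iff₀ (by nlinarith : (0:ℝ) < 1 - ‖B‖ * ε)]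
          have h7 : ‖lam‖⁻¹ * (1 - ‖B‖ * ε) < ‖lam‖⁻¹ * (‖lam‖ * ‖B‖) := by
            apply mul_lt_mul_of_pos_left _ (by positivity)
            nlinarith
          calc ‖lam‖⁻¹ * (1 - ‖B‖ * ε) < ‖lam‖⁻¹ * (‖lam‖ * ‖B‖) := h7
          _ = ‖B‖ := inv_mul_cancel_left₀ hlamp.ne' ‖B‖
        calc ‖ζ‖⁻¹ * ‖B ζ - lam⁻¹ • ζ‖ ≤ ‖ζ‖⁻¹ * (‖lam‖⁻¹ * ‖B‖) :=
              mul_le_mul_of_nonneg_left h5 (by positivity)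
        _ < ε * (‖B‖ / (1 - ‖B‖ * ε) * ‖B‖) := by
              apply mul_lt_mul'' hpε _ (by positivity) (by positivity)
              exact mul_lt_mul_of_pos_right hq hBpos
        _ = εt := by
              rw [hεtdef]
              field_simp
  obtain ⟨hlam0, hlamlb, x, hx1, hxP, hxB⟩ := hbig
  have hμ0 : lam⁻¹ ≠ 0 := inv_ne_zero hlam0
  have hμnorm : ‖lam⁻¹‖ < ‖B‖ / (1 - ‖B‖ * ε) := by
    have hlamp : 0 < ‖lam‖ := norm_pos_iff.mpr hlam0
    rw [norm_inv, lt_div_iff₀ (by nlinarith [hεB] : (0:ℝ) < 1 - ‖B‖ * ε)]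
    have h7 : ‖lam‖⁻¹ * (1 - ‖B‖ * ε) < ‖lam‖⁻¹ * (‖lam‖ * ‖B‖) := by
      apply mul_lt_mul_of_pos_left _ (by positivity)
      nlinarith [hlamlb]
    calc ‖lam‖⁻¹ * (1 - ‖B‖ * ε) < ‖lam‖⁻¹ * (‖lam‖ * ‖B‖) := h7
    _ = ‖B‖ := inv_mul_cancel_left₀ hlamp.ne' ‖B‖
  have hBεt : ‖B‖ / (1 - ‖B‖ * ε) = ‖B‖ + εt := by
    have hden : (1 - ‖B‖ * ε) ≠ 0 := by nlinarith [hεB]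
    rw [hεtdef]
    field_simp
    ring
  have hμnorm' : ‖lam⁻¹‖ < ‖B‖ + εt := by rw [← hBεt]; exact hμnorm
  have hv : ∃ v ∈ numRangeSub (Tinv n), ‖lam⁻¹ - v‖ < δ := by
    by_cases hcase : (r + ε) * (‖Binv‖ * ‖ι - (P n).comp ι‖) < 1/3
    · -- generic case : x is close to the subspace U n
      have ht3 : ‖x - P n x‖ < 1/3 := lt_of_le_of_lt hxP hcase
      set q := P n x with hqdef
      have hqlb : 2/3 < ‖q‖ := by
        have h1 := norm_sub_norm_le x q
        rw [hx1] at h1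
        linarith
      have hqpos : 0 < ‖q‖ := by linarith
      have hqP : ‖q‖ ≤ ‖P n‖ := by
        calc ‖q‖ ≤ ‖P n‖ * ‖x‖ := (P n).le_opNorm x
        _ = ‖P n‖ := by rw [hx1, mul_one]
      have hP1 : 1 ≤ ‖P n‖ := by
        have h1 : P n q = q := hPproj n q (hPmem n x)
        have h2 : ‖q‖ ≤ ‖P n‖ * ‖q‖ := by
          conv_lhs => rw [← h1]
          exact (P n).le_opNorm q
        nlinarith
      set qU : U n := ⟨q, hPmem n x⟩ with hqUdef
      have hqUn : ‖qU‖ = ‖q‖ := rfl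
      set y : U n := ((‖q‖ : ℂ))⁻¹ • qU with hydef
      have hyc : ((y : H)) = ((‖q‖ : ℂ))⁻¹ • q := rfl
      have hy1 : ‖(y : H)‖ = 1 := by rw [hyc]; exact norm_coe_inv_smul hqpos
      set Tq : H := ((Tinv n qU : U n) : H) with hTqdef
      have hTqn : ‖Tq‖ ≤ ‖Tinv n‖ * ‖q‖ := by
        calc ‖Tq‖ = ‖Tinv n qU‖ := rfl
        _ ≤ ‖Tinv n‖ * ‖qU‖ := (Tinv n).le_opNorm qU
        _ = ‖Tinv n‖ * ‖q‖ := by rw [hqUn]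
      have hvy : ((Tinv n y : U n) : H) = ((‖q‖ : ℂ))⁻¹ • Tq := by
        rw [hydef, map_smul, hTqdef]
        rfl
      set v : ℂ := (inner ℂ ((y : H)) (((Tinv n y : U n)) : H) : ℂ) with hvdef
      refine ⟨v, ⟨y, hy1, rfl⟩, ?_⟩
      have hSx : S n x = Tq := rfl
      -- inner product computations
      have hiv : v = ((((‖q‖ : ℝ)^2 : ℝ)) : ℂ)⁻¹ * (inner ℂ q Tq : ℂ) := by
        rw [hvdef, hvy, hyc, inner_smul_left, inner_smul_right, map_inv₀,
          Complex.conj_ofReal]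
        push_cast
        ring
      have hsplit : (inner ℂ x (S n x) : ℂ) - v
          = (inner ℂ (x - q) Tq : ℂ) + (1 - ((((‖q‖:ℝ)^2 : ℝ)) : ℂ)⁻¹) * (inner ℂ q Tq : ℂ) := by
        rw [hSx, hiv, inner_sub_left]
        ring
      have hb1 : ‖(inner ℂ (x - q) Tq : ℂ)‖ ≤ ‖x - q‖ * (‖Tinv n‖ * ‖P n‖) := by
        calc ‖(inner ℂ (x - q) Tq : ℂ)‖ ≤ ‖x - q‖ * ‖Tq‖ := norm_inner_le_norm _ _
        _ ≤ ‖x - q‖ * (‖Tinv n‖ * ‖q‖) :=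
            mul_le_mul_of_nonneg_left hTqn (norm_nonneg _)
        _ ≤ ‖x - q‖ * (‖Tinv n‖ * ‖P n‖) := by
            apply mul_le_mul_of_nonneg_left _ (norm_nonneg _)
            exact mul_le_mul_of_nonneg_left hqP (Tinv n).opNorm_nonneg
      have hb2 : ‖(1 - ((((‖q‖:ℝ)^2 : ℝ)) : ℂ)⁻¹) * (inner ℂ q Tq : ℂ)‖
          ≤ ‖x - q‖ * ((‖P n‖ + 1) * ‖Tinv n‖) := by
        have h1 : (1 - ((((‖q‖:ℝ)^2 : ℝ)) : ℂ)⁻¹) = (((1 - (‖q‖^2)⁻¹ : ℝ)) : ℂ) := by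
          push_cast
          ring
        rw [norm_mul, h1, Complex.norm_real, Real.norm_eq_abs]
        have h2 : ‖(inner ℂ q Tq : ℂ)‖ ≤ ‖Tinv n‖ * ‖q‖^2 := by
          calc ‖(inner ℂ q Tq : ℂ)‖ ≤ ‖q‖ * ‖Tq‖ := norm_inner_le_norm _ _
          _ ≤ ‖q‖ * (‖Tinv n‖ * ‖q‖) := mul_le_mul_of_nonneg_left hTqn (norm_nonneg _)
          _ = ‖Tinv n‖ * ‖q‖^2 := by ring
        have h3 : |1 - (‖q‖^2)⁻¹| * ‖q‖^2 = |‖q‖^2 - 1| := by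
          rw [← abs_of_pos (show (0:ℝ) < ‖q‖^2 by positivity), ← abs_mul]
          congr 1
          field_simp
          rw [abs_of_pos (by positivity : (0:ℝ) < ‖q‖^2)]
        have h4 : |‖q‖^2 - 1| ≤ ‖x - q‖ * (‖q‖ + 1) := by
          have h5 : |‖q‖ - 1| ≤ ‖x - q‖ := by
            have h6 := abs_norm_sub_norm_le q x
            rw [hx1, norm_sub_rev] at h6
            exact h6
          have h7 : |‖q‖^2 - 1| = |‖q‖ - 1| * (‖q‖ + 1) := by
            rw [← abs_of_pos (show (0:ℝ) < ‖q‖ + 1 by positivity), ← abs_mul]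
            congr 1
            ring
          rw [h7]
          exact mul_le_mul_of_nonneg_right h5 (by positivity)
        calc |1 - (‖q‖^2)⁻¹| * ‖(inner ℂ q Tq : ℂ)‖
            ≤ |1 - (‖q‖^2)⁻¹| * (‖Tinv n‖ * ‖q‖^2) :=
              mul_le_mul_of_nonneg_left h2 (abs_nonneg _)
        _ = (|1 - (‖q‖^2)⁻¹| * ‖q‖^2) * ‖Tinv n‖ := by ring
        _ = |‖q‖^2 - 1| * ‖Tinv n‖ := by rw [h3]
        _ ≤ (‖x - q‖ * (‖q‖ + 1)) * ‖Tinv n‖ :=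
              mul_le_mul_of_nonneg_right h4 (Tinv n).opNorm_nonneg
        _ ≤ (‖x - q‖ * (‖P n‖ + 1)) * ‖Tinv n‖ := by
              apply mul_le_mul_of_nonneg_right _ (Tinv n).opNorm_nonneg
              exact mul_le_mul_of_nonneg_left (by linarith) (norm_nonneg _)
        _ = ‖x - q‖ * ((‖P n‖ + 1) * ‖Tinv n‖) := by ring
      have hb3 : ‖(inner ℂ x (S n x) : ℂ) - v‖ ≤ ‖x - q‖ * (‖Tinv n‖ * (2 * ‖P n‖ + 1)) := by
        rw [hsplit]
        calc ‖(inner ℂ (x - q) Tq : ℂ) + (1 - ((((‖q‖:ℝ)^2 : ℝ)) : ℂ)⁻¹) * (inner ℂ q Tq : ℂ)‖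
            ≤ ‖(inner ℂ (x - q) Tq : ℂ)‖
              + ‖(1 - ((((‖q‖:ℝ)^2 : ℝ)) : ℂ)⁻¹) * (inner ℂ q Tq : ℂ)‖ := norm_add_le _ _
        _ ≤ ‖x - q‖ * (‖Tinv n‖ * ‖P n‖) + ‖x - q‖ * ((‖P n‖ + 1) * ‖Tinv n‖) :=
              add_le_add hb1 hb2
        _ = ‖x - q‖ * (‖Tinv n‖ * (2 * ‖P n‖ + 1)) := by ring
      have hb4 : ‖Tinv n‖ * (2 * ‖P n‖ + 1) ≤ cf n := by
        have h8 : 0 ≤ ‖Tinv n‖ := (Tinv n).opNorm_nonneg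
        show ‖Tinv n‖ * (2 * ‖P n‖ + 1) ≤ ‖Tinv n‖ * ‖P n‖ + 6 * ‖Tinv n‖ * ‖P n‖ ^ 2
        nlinarith [mul_nonneg h8 (norm_nonneg (P n))]
      have hb5 : ‖(inner ℂ x (S n x) : ℂ) - v‖
          ≤ ((r + ε) * (‖Binv‖ * ‖ι - (P n).comp ι‖)) * C₀ := by
        apply le_trans hb3
        apply mul_le_mul hxP (le_trans hb4 (hcfC₀ n)) (by positivity) (by positivity)
      have hb6 : ‖(inner ℂ x (B x) : ℂ) - (inner ℂ x (S n x) : ℂ)‖ ≤ ‖B - S n‖ := by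
        have h9 : (inner ℂ x (B x) : ℂ) - (inner ℂ x (S n x) : ℂ)
            = (inner ℂ x ((B - S n) x) : ℂ) := by
          rw [ContinuousLinearMap.sub_apply, inner_sub_right]
        rw [h9]
        calc ‖(inner ℂ x ((B - S n) x) : ℂ)‖ ≤ ‖x‖ * ‖(B - S n) x‖ := norm_inner_le_norm _ _
        _ ≤ ‖x‖ * (‖B - S n‖ * ‖x‖) :=
            mul_le_mul_of_nonneg_left ((B - S n).le_opNorm x) (norm_nonneg _)
        _ = ‖B - S n‖ := by rw [hx1]; ring
      have h10 : lam⁻¹ - v = (lam⁻¹ - (inner ℂ x (B x) : ℂ))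
          + (((inner ℂ x (B x) : ℂ) - (inner ℂ x (S n x) : ℂ))
          + ((inner ℂ x (S n x) : ℂ) - v)) := by ring
      have h11 : ((r + ε) * (‖Binv‖ * ‖ι - (P n).comp ι‖)) * C₀
          = (r + ε) * ‖Binv‖ * C₀ * ‖ι - (P n).comp ι‖ := by ring
      calc ‖lam⁻¹ - v‖ ≤ ‖lam⁻¹ - (inner ℂ x (B x) : ℂ)‖
          + (‖(inner ℂ x (B x) : ℂ) - (inner ℂ x (S n x) : ℂ)‖
            + ‖(inner ℂ x (S n x) : ℂ) - v‖) := by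
            rw [h10]
            exact le_trans (norm_add_le _ _) (by gcongr; exact norm_add_le _ _)
      _ < εt + (‖B - S n‖ + (r + ε) * ‖Binv‖ * C₀ * ‖ι - (P n).comp ι‖) := by
            rw [← h11]
            have h12 : ‖lam⁻¹ - (inner ℂ x (B x) : ℂ)‖ < εt := by
              rw [norm_sub_rev]
              exact hxB
            have h13 := add_le_add hb6 hb5
            linarith
      _ < εt + (δ - εt) := by linarith
      _ = δ := by ring
    · -- degenerate case : the subspace is "large"
      push_neg at hcase
      by_cases hU : ∃ u0 : H, u0 ∈ U n ∧ u0 ≠ 0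
      · obtain ⟨u0, hu0m, hu00⟩ := hU
        have hu0pos : 0 < ‖u0‖ := norm_pos_iff.mpr hu00
        set y : U n := ((‖u0‖ : ℂ))⁻¹ • (⟨u0, hu0m⟩ : U n) with hydef
        have hyc : ((y : H)) = ((‖u0‖ : ℂ))⁻¹ • u0 := rfl
        have hy1 : ‖(y : H)‖ = 1 := by rw [hyc]; exact norm_coe_inv_smul hu0pos
        set v : ℂ := (inner ℂ ((y : H)) (((Tinv n y : U n)) : H) : ℂ) with hvdef
        refine ⟨v, ⟨y, hy1, rfl⟩, ?_⟩
        have hvb : ‖v‖ ≤ ‖Tinv n‖ := by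
          rw [hvdef]
          calc ‖(inner ℂ ((y : H)) (((Tinv n y : U n)) : H) : ℂ)‖
              ≤ ‖(y : H)‖ * ‖((Tinv n y : U n) : H)‖ := norm_inner_le_norm _ _
          _ = ‖Tinv n y‖ := by rw [hy1, one_mul]; rfl
          _ ≤ ‖Tinv n‖ * ‖y‖ := (Tinv n).le_opNorm y
          _ = ‖Tinv n‖ := by
              have h1 : ‖y‖ = 1 := hy1
              rw [h1, mul_one]
        have hT2 : ‖Tinv n‖ ≤ ‖B‖ + ‖B - S n‖ := le_trans (hTleS n) (hSB n)
        have h1 : ‖lam⁻¹ - v‖ ≤ ‖lam⁻¹‖ + ‖v‖ := norm_sub_le _ _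
        have h2 : (1/3) * C₀ ≤ ((r + ε) * (‖Binv‖ * ‖ι - (P n).comp ι‖)) * C₀ :=
          mul_le_mul_of_nonneg_right hcase hC₀0
        have h11 : ((r + ε) * (‖Binv‖ * ‖ι - (P n).comp ι‖)) * C₀
            = (r + ε) * ‖Binv‖ * C₀ * ‖ι - (P n).comp ι‖ := by ring
        rw [h11] at h2
        -- 2‖B‖ ≤ (1/3) C₀ since 7‖B‖ ≤ C₀
        have h3 : 2 * ‖B‖ ≤ (1/3) * C₀ := by linarith
        linarith [hμnorm', hvb, hT2, hkey, h1]
      · -- U n = 0 : contradiction with the quantitative hypothesis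
        exfalso
        push_neg at hU
        have hSn0 : S n = 0 := by
          ext w
          have h1 := hSmem n w
          simpa using hU _ h1
        have hPι0 : (P n).comp ι = 0 := by
          ext w
          exact hU _ (hPmem n (ι w))
        have hβn : ‖B - S n‖ = ‖B‖ := by rw [hSn0, sub_zero]
        have hιn : ‖ι - (P n).comp ι‖ = ‖ι‖ := by rw [hPι0, sub_zero]
        have hBι : ‖B‖ ≤ ‖Binv‖ * ‖ι‖ := by
          apply ContinuousLinearMap.opNorm_le_bound _ (by positivity)
          intro w
          calc ‖B w‖ = ‖ι (Binv w)‖ := by rw [hBinv w]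
          _ ≤ ‖ι‖ * ‖Binv w‖ := ι.le_opNorm _
          _ ≤ ‖ι‖ * (‖Binv‖ * ‖w‖) :=
              mul_le_mul_of_nonneg_left (Binv.le_opNorm w) (norm_nonneg _)
          _ = ‖Binv‖ * ‖ι‖ * ‖w‖ := by ring
        have hrB : 1 ≤ (r + ε) * ‖B‖ := by
          have h5 : ‖lam‖ * ‖B‖ ≤ r * ‖B‖ := mul_le_mul_of_nonneg_right hlamr hBpos.le
          nlinarith
        rw [hβn, hιn] at hkey
        have h2 : 7 * ‖B‖ ≤ (r + ε) * ‖Binv‖ * C₀ * ‖ι‖ := by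
          have h3 : 1 * C₀ ≤ ((r + ε) * (‖Binv‖ * ‖ι‖)) * C₀ := by
            apply mul_le_mul_of_nonneg_right _ hC₀0
            calc (1:ℝ) ≤ (r + ε) * ‖B‖ := hrB
            _ ≤ (r + ε) * (‖Binv‖ * ‖ι‖) := mul_le_mul_of_nonneg_left hBι hrε.le
          nlinarith [hC₀B]
        have h4 : δ - εt ≤ 7/2 * ‖B‖ := by linarith
        linarith
  obtain ⟨v, hvmem, hvd⟩ := hv
  exact ⟨lam⁻¹, ⟨v, hvmem, by rw [dist_eq_norm]; exact hvd⟩, hμ0, (inv_inv lam).symm⟩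
end
end
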